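/- Let f : ℝ² → ℝ be continuous and compactly supported with f*c = 0 for every constant sequence c : ℤ² → ℝ (equivalently, Σ_{α∈ℤ²} f(x − α) = 0 for all x ∈ ℝ²). Then there exist continuous compactly supported functions g₁, g₂ : ℝ² → ℝ such that for every bounded c : ℤ² → ℝ, f*c = g₁*(∇₁c) + g₂*(∇₂c). -/

import Mathlib

/-- Bi-infinite two-dimensional integer index set `ℤ²`. -/
abbrev Z2 : Type := Fin 2 → ℤ

/-- Cast of an integer vector to `ℝ²`. -/
noncomputable def castV (α : Z2) : Fin 2 → ℝ := fun i => (α i : ℝ)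

/-- A sequence `c : ℤ² → ℝ` is bounded. -/
def Bdd (c : Z2 → ℝ) : Prop := ∃ K : ℝ, ∀ α, |c α| ≤ K

/-- The semi-discrete convolution `f * c = Σ_α c(α) f(· − α)`. -/
noncomputable def conv (f : (Fin 2 → ℝ) → ℝ) (c : Z2 → ℝ) : (Fin 2 → ℝ) → ℝ :=
  fun x => ∑' α : Z2, c α * f (x - castV α)

/-- Backward difference `∇₁c = c(· − e₁) − c`. -/
def nabla1 (c : Z2 → ℝ) : Z2 → ℝ := fun α => c (α - ![1, 0]) - c α

/-- Backward difference `∇₂c = c(· − e₂) − c`. -/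
def nabla2 (c : Z2 → ℝ) : Z2 → ℝ := fun α => c (α - ![0, 1]) - c α

noncomputable def phiH (t : ℝ) : ℝ := max 0 (1 - |t|)
noncomputable def psiH (t : ℝ) : ℝ := min 1 (max 0 (-t))

lemma psiH_step (s : ℝ) : psiH (s - 1) - psiH s = phiH s := by
  simp only [phiH, psiH, abs_eq_max_neg, min_def, max_def]
  split_ifs <;> linarith

lemma psiH_of_nonneg {t : ℝ} (h : 0 ≤ t) : psiH t = 0 := by
  simp only [psiH, min_def, max_def]; split_ifs <;> linarith

lemma psiH_of_le {t : ℝ} (h : t ≤ -1) : psiH t = 1 := by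
  simp only [psiH, min_def, max_def]; split_ifs <;> linarith

lemma phiH_of_abs {t : ℝ} (h : 1 ≤ |t|) : phiH t = 0 := by
  simp only [phiH, max_def]; split_ifs with h1 <;> linarith

lemma phiH_cont : Continuous phiH := by unfold phiH; fun_prop
lemma psiH_cont : Continuous psiH := by unfold psiH; fun_prop


lemma st13_int_finite (C : ℝ) : {m : ℤ | |(m:ℝ)| ≤ C}.Finite := by
  apply Set.Finite.subset (Set.finite_Icc (⌈-C⌉) (⌊C⌋))
  intro m hm
  simp only [Set.mem_setOf_eq, abs_le] at hm
  simp only [Set.mem_Icc, Int.ceil_le, Int.le_floor]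
  exact ⟨hm.1, hm.2⟩

lemma st13_cont_helper {ι : Type*} (f : (Fin 2 → ℝ) → ℝ) (hfc : Continuous f) (R : ℝ)
    (hRf : ∀ z : Fin 2 → ℝ, R < ‖z‖ → f z = 0)
    (w : ι → Fin 2 → ℝ) (P : ι → Prop) [DecidablePred P]
    (hw : ∀ C : ℝ, {i : ι | ‖w i‖ ≤ C}.Finite) :
    Continuous fun y : Fin 2 → ℝ => ∑' i : ι, if P i then f (y - w i) else 0 := by
  rw [continuous_iff_continuousAt]
  intro x₀
  set F : Finset ι := (hw (‖x₀‖ + 1 + R)).toFinset with hF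
  have hev : ∀ y ∈ Metric.ball x₀ 1,
      (∑' i : ι, if P i then f (y - w i) else 0)
        = ∑ i ∈ F, (if P i then f (y - w i) else 0) := by
    intro y hy
    apply tsum_eq_sum
    intro i hi
    have hwi : ‖x₀‖ + 1 + R < ‖w i‖ := by
      by_contra hc
      exact hi (by simp [hF, Set.Finite.mem_toFinset]; linarith)
    have hyn : ‖y‖ < ‖x₀‖ + 1 := by
      have := norm_sub_norm_le y x₀
      have hd : ‖y - x₀‖ < 1 := by simpa [dist_eq_norm] using Metric.mem_ball.mp hy
      linarith
    have : R < ‖y - w i‖ := by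
      have h1 : ‖w i‖ - ‖y‖ ≤ ‖y - w i‖ := by
        have := norm_sub_norm_le (w i) y
        simpa [norm_sub_rev] using this
      linarith
    split_ifs
    · exact hRf _ this
    · rfl
  have hcf : Continuous fun y : Fin 2 → ℝ => ∑ i ∈ F, (if P i then f (y - w i) else 0) := by
    apply continuous_finset_sum
    intro i _
    by_cases h : P i
    · simp only [if_pos h]; exact hfc.comp (continuous_id.sub continuous_const)
    · simpa [h] using continuous_const
  exact (hcf.continuousAt).congr
    (Filter.eventuallyEq_of_mem (Metric.ball_mem_nhds x₀ one_pos) fun y hy => (hev y hy).symm)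


lemma st13_abel (b B : ℤ → ℝ) (M : ℤ) (hM : 0 ≤ M) (h1 : B (-M) = 0) (h2 : B (M + 1) = 0) :
    ∑ k ∈ Finset.Icc (-M) M, (b (k - 1) - b k) * B k
      = ∑ k ∈ Finset.Icc (-M) M, b k * (B (k + 1) - B k) := by
  have key : ∑ k ∈ Finset.Icc (-M) M, b (k - 1) * B k
      = ∑ k ∈ Finset.Icc (-M) M, b k * B (k + 1) := by
    have e1 : Finset.Icc (-M) M = Finset.map (addRightEmbedding 1) (Finset.Icc (-M-1) (M-1)) := by
      rw [Finset.map_add_right_Icc]; congr 1 <;> ring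
    have h3 : ∑ k ∈ Finset.Icc (-M) M, b (k - 1) * B k
        = ∑ j ∈ Finset.Icc (-M-1) (M-1), b j * B (j + 1) := by
      rw [e1, Finset.sum_map]
      apply Finset.sum_congr rfl
      intro j _
      simp [addRightEmbedding]
    rw [h3]
    have i1 : Finset.Icc (-M-1) M = insert (-M-1) (Finset.Icc (-M) M) := by
      ext z; simp only [Finset.mem_Icc, Finset.mem_insert]; omega
    have i2 : Finset.Icc (-M-1) M = insert M (Finset.Icc (-M-1) (M-1)) := by
      ext z; simp only [Finset.mem_Icc, Finset.mem_insert]; omega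
    have n1 : (-M-1) ∉ Finset.Icc (-M) M := by simp only [Finset.mem_Icc]; omega
    have n2 : M ∉ Finset.Icc (-M-1) (M-1) := by simp only [Finset.mem_Icc]; omega
    have c1 : ∑ j ∈ Finset.Icc (-M-1) M, b j * B (j + 1)
        = b (-M-1) * B (-M) + ∑ j ∈ Finset.Icc (-M) M, b j * B (j+1) := by
      rw [i1, Finset.sum_insert n1]; norm_num
    have c2 : ∑ j ∈ Finset.Icc (-M-1) M, b j * B (j + 1)
        = b M * B (M+1) + ∑ j ∈ Finset.Icc (-M-1) (M-1), b j * B (j+1) := by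
      rw [i2, Finset.sum_insert n2]
    rw [h1, mul_zero, zero_add] at c1
    rw [h2, mul_zero, zero_add] at c2
    rw [← c2, c1]
  calc ∑ k ∈ Finset.Icc (-M) M, (b (k - 1) - b k) * B k
      = (∑ k ∈ Finset.Icc (-M) M, b (k-1) * B k) - ∑ k ∈ Finset.Icc (-M) M, b k * B k := by
        rw [← Finset.sum_sub_distrib]; apply Finset.sum_congr rfl; intros; ring
    _ = (∑ k ∈ Finset.Icc (-M) M, b k * B (k+1)) - ∑ k ∈ Finset.Icc (-M) M, b k * B k := by rw [key]
    _ = _ := by rw [← Finset.sum_sub_distrib]; apply Finset.sum_congr rfl; intros; ring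


lemma st13_coord0 (y : Fin 2 → ℝ) (m n : ℤ) : (y - castV ![m, n]) 0 = y 0 - (m:ℝ) := by
  simp [castV]
lemma st13_coord1 (y : Fin 2 → ℝ) (m n : ℤ) : (y - castV ![m, n]) 1 = y 1 - (n:ℝ) := by
  simp [castV]
lemma st13_shift (x : Fin 2 → ℝ) (k r m n : ℤ) :
    x - castV ![k, r] - castV ![m, n] = x - castV ![k + m, r + n] := by
  funext i; fin_cases i <;> simp [castV] <;> ring
lemma st13_vsub1 (k r : ℤ) : (![k, r] : Z2) - ![1, 0] = ![k - 1, r] := by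
  funext i; fin_cases i <;> simp
lemma st13_vsub2 (k r : ℤ) : (![k, r] : Z2) - ![0, 1] = ![k, r - 1] := by
  funext i; fin_cases i <;> simp
lemma st13_pair (p : ℤ × ℤ) : (piFinTwoEquiv fun _ => ℤ).symm p = ![p.1, p.2] := by
  funext i; fin_cases i <;> rfl

noncomputable def G1 (f : (Fin 2 → ℝ) → ℝ) : (Fin 2 → ℝ) → ℝ := fun y =>
  (1 - psiH (y 0)) * (∑' m : ℤ, f (y - castV ![m, 0]))
    - ∑' m : ℤ, if 0 ≤ m then f (y - castV ![m, 0]) else 0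

noncomputable def G2 (f : (Fin 2 → ℝ) → ℝ) : (Fin 2 → ℝ) → ℝ := fun y =>
  -phiH (y 0) * ∑' p : ℤ × ℤ, if 0 ≤ p.2 then f (y - castV ![p.1, p.2]) else 0

section
variable (f : (Fin 2 → ℝ) → ℝ) (R : ℝ)

lemma st13_coordvanish (hRf : ∀ z : Fin 2 → ℝ, R < ‖z‖ → f z = 0)
    (z : Fin 2 → ℝ) (h : R < |z 0| ∨ R < |z 1|) : f z = 0 := by
  apply hRf
  rcases h with h | h
  · exact lt_of_lt_of_le h (by simpa [Real.norm_eq_abs] using norm_le_pi_norm z 0)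
  · exact lt_of_lt_of_le h (by simpa [Real.norm_eq_abs] using norm_le_pi_norm z 1)

variable (hRf : ∀ z : Fin 2 → ℝ, (R < |z 0| ∨ R < |z 1|) → f z = 0)

include hRf in
lemma st13_G1_zero (hR0 : 0 ≤ R) (y : Fin 2 → ℝ) (h : R + 2 < |y 0| ∨ R < |y 1|) :
    G1 f y = 0 := by
  unfold G1
  rcases h with h | h
  · rcases abs_cases (y 0) with ⟨he, _⟩ | ⟨he, _⟩
    · -- y 0 > R + 2 ≥ 0
      have hy0 : R + 2 < y 0 := by linarith
      have hpsi : psiH (y 0) = 0 := by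
        simp only [psiH]; rw [max_eq_left (by linarith), min_eq_right (by norm_num)]
      have ht : ∀ m : ℤ, (if (0:ℤ) ≤ m then f (y - castV ![m, 0]) else 0)
          = f (y - castV ![m, 0]) := by
        intro m
        split_ifs with hm
        · rfl
        · symm
          apply hRf
          left
          rw [st13_coord0]
          have : (m:ℝ) ≤ -1 := by exact_mod_cast (by omega : m ≤ -1)
          rw [abs_of_nonneg (by linarith)]; linarith
      rw [tsum_congr ht, hpsi]; ring
    · -- y 0 < -(R+2)
      have hy0 : y 0 < -(R + 2) := by linarith
      have hpsi : psiH (y 0) = 1 := by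
        simp only [psiH]; rw [max_eq_right (by linarith), min_eq_left (by linarith)]
      have ht : ∀ m : ℤ, (if (0:ℤ) ≤ m then f (y - castV ![m, 0]) else 0) = 0 := by
        intro m
        split_ifs with hm
        · apply hRf
          left
          rw [st13_coord0]
          have : (0:ℝ) ≤ (m:ℝ) := by exact_mod_cast hm
          rw [abs_of_nonpos (by linarith)]; linarith
        · rfl
      rw [tsum_congr ht, tsum_zero, hpsi]; ring
  · have h1 : ∀ m : ℤ, f (y - castV ![m, 0]) = 0 := by
      intro m; apply hRf; right; rw [st13_coord1]; push_cast; simpa using h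
    have h2 : ∀ m : ℤ, (if (0:ℤ) ≤ m then f (y - castV ![m, 0]) else 0) = 0 := by
      intro m; split_ifs <;> simp [h1]
    rw [tsum_congr h1, tsum_congr h2, tsum_zero]; ring

include hRf in
lemma st13_G2_zero (hR0 : 0 ≤ R)
    (h0 : ∀ x : Fin 2 → ℝ, ∑' α : Z2, f (x - castV α) = 0)
    (y : Fin 2 → ℝ) (h : 1 ≤ |y 0| ∨ R < |y 1|) : G2 f y = 0 := by
  unfold G2
  rcases h with h | h
  · have : phiH (y 0) = 0 := by
      simp only [phiH]; rw [max_eq_left (by rw [sub_nonpos]; exact h)]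
    rw [this]; ring
  · rcases abs_cases (y 1) with ⟨he, _⟩ | ⟨he, _⟩
    · -- y 1 > R : use h0
      have hy1 : R < y 1 := by linarith
      have hfull : ∑' p : ℤ × ℤ, f (y - castV ![p.1, p.2]) = 0 := by
        have := ((piFinTwoEquiv fun _ => ℤ).symm).tsum_eq (fun α : Z2 => f (y - castV α))
        rw [← h0 y, ← this]
        exact tsum_congr fun p => by rw [st13_pair]
      have ht : ∀ p : ℤ × ℤ, (if (0:ℤ) ≤ p.2 then f (y - castV ![p.1, p.2]) else 0)
          = f (y - castV ![p.1, p.2]) := by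
        intro p
        split_ifs with hp
        · rfl
        · symm
          apply hRf
          right
          rw [st13_coord1]
          have : (p.2:ℝ) ≤ -1 := by exact_mod_cast (by omega : p.2 ≤ -1)
          rw [abs_of_nonneg (by linarith)]; linarith
      rw [tsum_congr ht, hfull]; ring
    · have hy1 : y 1 < -R := by
        rcases lt_or_ge (y 1) (-R) with hh | hh
        · exact hh
        · exfalso; rw [abs_of_nonpos (by linarith)] at h; linarith
      have ht : ∀ p : ℤ × ℤ, (if (0:ℤ) ≤ p.2 then f (y - castV ![p.1, p.2]) else 0) = 0 := by
        intro p
        split_ifs with hp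
        · apply hRf
          right
          rw [st13_coord1]
          have : (0:ℝ) ≤ (p.2:ℝ) := by exact_mod_cast hp
          rw [abs_of_nonpos (by linarith)]; linarith
        · rfl
      rw [tsum_congr ht, tsum_zero]; ring
end

section
variable (f : (Fin 2 → ℝ) → ℝ) (R : ℝ) (hfc : Continuous f)
  (hRf : ∀ z : Fin 2 → ℝ, R < ‖z‖ → f z = 0)

lemma st13_norm_w1 (m : ℤ) : |(m:ℝ)| ≤ ‖castV ![m, 0]‖ := by
  have := norm_le_pi_norm (castV ![m, 0]) 0
  simpa [castV, Real.norm_eq_abs] using this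

lemma st13_norm_w2 (p : ℤ × ℤ) :
    |(p.1:ℝ)| ≤ ‖castV ![p.1, p.2]‖ ∧ |(p.2:ℝ)| ≤ ‖castV ![p.1, p.2]‖ := by
  constructor
  · have := norm_le_pi_norm (castV ![p.1, p.2]) 0
    simpa [castV, Real.norm_eq_abs] using this
  · have := norm_le_pi_norm (castV ![p.1, p.2]) 1
    simpa [castV, Real.norm_eq_abs] using this

lemma st13_hw1 (C : ℝ) : {m : ℤ | ‖castV ![m, 0]‖ ≤ C}.Finite := by
  apply (st13_int_finite C).subset
  intro m hm
  exact le_trans (st13_norm_w1 m) hm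

lemma st13_hw2 (C : ℝ) : {p : ℤ × ℤ | ‖castV ![p.1, p.2]‖ ≤ C}.Finite := by
  apply (Set.Finite.prod (st13_int_finite C) (st13_int_finite C)).subset
  intro p hp
  exact ⟨le_trans (st13_norm_w2 p).1 hp, le_trans (st13_norm_w2 p).2 hp⟩

include hfc hRf in
lemma st13_G1_cont : Continuous (G1 f) := by
  have c1 : Continuous fun y : Fin 2 → ℝ =>
      ∑' m : ℤ, if True then f (y - castV ![m, 0]) else 0 :=
    st13_cont_helper f hfc R hRf _ _ (st13_hw1)
  simp only [if_true] at c1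
  have c2 : Continuous fun y : Fin 2 → ℝ =>
      ∑' m : ℤ, if (0:ℤ) ≤ m then f (y - castV ![m, 0]) else 0 :=
    st13_cont_helper f hfc R hRf _ _ (st13_hw1)
  exact ((continuous_const.sub (psiH_cont.comp (continuous_apply 0))).mul c1).sub c2

include hfc hRf in
lemma st13_G2_cont : Continuous (G2 f) := by
  have c2 : Continuous fun y : Fin 2 → ℝ =>
      ∑' p : ℤ × ℤ, if (0:ℤ) ≤ p.2 then f (y - castV ![p.1, p.2]) else 0 :=
    st13_cont_helper f hfc R hRf _ _ (st13_hw2)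
  exact ((phiH_cont.comp (continuous_apply 0)).neg).mul c2
end

lemma st13_main (f : (Fin 2 → ℝ) → ℝ) (R : ℝ) (hR0 : 0 ≤ R)
    (hRc : ∀ z : Fin 2 → ℝ, (R < |z 0| ∨ R < |z 1|) → f z = 0)
    (h0 : ∀ x : Fin 2 → ℝ, ∑' α : Z2, f (x - castV α) = 0)
    (c : Z2 → ℝ) (x : Fin 2 → ℝ) :
    conv f c x = conv (G1 f) (nabla1 c) x + conv (G2 f) (nabla2 c) x := by
  set E := (piFinTwoEquiv fun _ => ℤ).symm with hE
  set M : ℤ := ⌈|x 0| + |x 1| + R⌉ + 3 with hMdef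
  have hceil : (0:ℤ) ≤ ⌈|x 0| + |x 1| + R⌉ :=
    Int.ceil_nonneg (by positivity)
  have hM3 : (0:ℤ) ≤ M := by omega
  have hMx0 : |x 0| + R + 3 ≤ (M:ℝ) := by
    have h := Int.le_ceil (|x 0| + |x 1| + R)
    have h2 : (0:ℝ) ≤ |x 1| := abs_nonneg _
    rw [hMdef]; push_cast; linarith
  have hMx1 : |x 1| + R + 3 ≤ (M:ℝ) := by
    have h := Int.le_ceil (|x 0| + |x 1| + R)
    have h2 : (0:ℝ) ≤ |x 0| := abs_nonneg _
    rw [hMdef]; push_cast; linarith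
  set I : Finset ℤ := Finset.Icc (-M) M with hI
  set a : ℤ → ℤ → ℝ := fun k r => f (x - castV ![k, r]) with ha
  have hout : ∀ k : ℤ, k ∉ I → (M:ℝ) + 1 ≤ |(k:ℝ)| := by
    intro k hk
    have hk' : M + 1 ≤ k ∨ k ≤ -(M+1) := by
      simp only [hI, Finset.mem_Icc] at hk; omega
    rcases hk' with h | h
    · have : (M:ℝ) + 1 ≤ (k:ℝ) := by exact_mod_cast h
      exact le_trans this (le_abs_self _)
    · have h' : (k:ℝ) ≤ -((M:ℝ) + 1) := by exact_mod_cast h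
      calc (M:ℝ) + 1 ≤ -(k:ℝ) := by linarith
        _ ≤ |(k:ℝ)| := neg_le_abs (k:ℝ)
  have hbig0 : ∀ k : ℤ, k ∉ I → R + 2 < |x 0 - (k:ℝ)| := by
    intro k hk
    have h1 := hout k hk
    have h2 : |(k:ℝ)| - |x 0| ≤ |(k:ℝ) - x 0| := abs_sub_abs_le_abs_sub _ _
    rw [abs_sub_comm] at h2
    linarith
  have hbig1 : ∀ r : ℤ, r ∉ I → R + 2 < |x 1 - (r:ℝ)| := by
    intro r hr
    have h1 := hout r hr
    have h2 : |(r:ℝ)| - |x 1| ≤ |(r:ℝ) - x 1| := abs_sub_abs_le_abs_sub _ _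
    rw [abs_sub_comm] at h2
    linarith
  have ha0 : ∀ k r : ℤ, k ∉ I → a k r = 0 := by
    intro k r hk
    apply hRc
    left
    rw [st13_coord0]
    linarith [hbig0 k hk]
  have ha1 : ∀ k r : ℤ, r ∉ I → a k r = 0 := by
    intro k r hr
    apply hRc
    right
    rw [st13_coord1]
    linarith [hbig1 r hr]
  set T : ℤ → ℝ := fun r => ∑ j ∈ I, a j r with hT
  set A : ℤ → ℤ → ℝ := fun k r => ∑ j ∈ I, if k ≤ j then a j r else 0 with hA
  set A2 : ℤ → ℝ := fun k => ∑ j ∈ I, ∑ r ∈ I, if k ≤ r then a j r else 0 with hA2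
  -- box version of h0
  have h0box : ∑ j ∈ I, ∑ r ∈ I, a j r = 0 := by
    have e2 : ∑' p : ℤ × ℤ, a p.1 p.2 = 0 := by
      have hc : ∑' p : ℤ × ℤ, a p.1 p.2
          = ∑' p : ℤ × ℤ, f (x - castV (E p)) :=
        tsum_congr fun p => by rw [hE, st13_pair]
      rw [hc, E.tsum_eq (fun α : Z2 => f (x - castV α))]
      exact h0 x
    have e3 : ∑' p : ℤ × ℤ, a p.1 p.2 = ∑ p ∈ I ×ˢ I, a p.1 p.2 := by
      apply tsum_eq_sum
      intro p hp
      rcases (by simpa [Finset.mem_product, -not_and] using hp : ¬(p.1 ∈ I ∧ p.2 ∈ I)) with h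
      by_cases h1 : p.1 ∈ I
      · exact ha1 p.1 p.2 (fun h2 => h ⟨h1, h2⟩)
      · exact ha0 p.1 p.2 h1
    have e4 : (∑ p ∈ I ×ˢ I, a p.1 p.2) = ∑ j ∈ I, ∑ r ∈ I, a j r :=
      Finset.sum_product I I (fun p => a p.1 p.2)
    rw [← e4, ← e3, e2]
  -- evaluation of G1
  have hG1 : ∀ k r : ℤ, G1 f (x - castV ![k, r])
      = (1 - psiH (x 0 - (k:ℝ))) * T r - A k r := by
    intro k r
    have hy0 : (x - castV ![k, r]) 0 = x 0 - (k:ℝ) := st13_coord0 x k r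
    have s1 : (∑' m : ℤ, f (x - castV ![k, r] - castV ![m, 0])) = T r := by
      have hc : ∀ m : ℤ, f (x - castV ![k, r] - castV ![m, 0]) = a (k + m) r := by
        intro m; rw [st13_shift]; simp [ha]
      rw [tsum_congr hc]
      rw [show (fun m : ℤ => a (k + m) r)
            = fun m : ℤ => (fun j => a j r) ((Equiv.addLeft k) m) from rfl]
      rw [(Equiv.addLeft k).tsum_eq (fun j => a j r)]
      exact tsum_eq_sum fun j hj => ha0 j r hj
    have s2 : (∑' m : ℤ, if (0:ℤ) ≤ m then f (x - castV ![k, r] - castV ![m, 0]) else 0)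
        = A k r := by
      have hc : ∀ m : ℤ, (if (0:ℤ) ≤ m then f (x - castV ![k, r] - castV ![m, 0]) else 0)
          = (fun j => if k ≤ j then a j r else 0) ((Equiv.addLeft k) m) := by
        intro m
        simp only [Equiv.coe_addLeft]
        rw [st13_shift]
        by_cases hm : (0:ℤ) ≤ m
        · rw [if_pos hm]; simp [ha, hm]
        · rw [if_neg hm]; simp [hm]
      rw [tsum_congr hc]
      rw [(Equiv.addLeft k).tsum_eq (fun j => if k ≤ j then a j r else 0)]
      apply tsum_eq_sum
      intro j hj
      split_ifs
      · exact ha0 j r hj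
      · rfl
    show (1 - psiH ((x - castV ![k, r]) 0)) * _ - _ = _
    rw [hy0, s1, s2]
  -- evaluation of G2
  have hG2 : ∀ q k : ℤ, G2 f (x - castV ![q, k]) = -phiH (x 0 - (q:ℝ)) * A2 k := by
    intro q k
    have hy0 : (x - castV ![q, k]) 0 = x 0 - (q:ℝ) := st13_coord0 x q k
    have s1 : (∑' p : ℤ × ℤ, if (0:ℤ) ≤ p.2
          then f (x - castV ![q, k] - castV ![p.1, p.2]) else 0)
        = A2 k := by
      set e : ℤ × ℤ ≃ ℤ × ℤ := (Equiv.addLeft q).prodCongr (Equiv.addLeft k) with he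
      have hc : ∀ p : ℤ × ℤ, (if (0:ℤ) ≤ p.2
            then f (x - castV ![q, k] - castV ![p.1, p.2]) else 0)
          = (fun p : ℤ × ℤ => if k ≤ p.2 then a p.1 p.2 else 0) (e p) := by
        intro p
        simp only [he, Equiv.prodCongr_apply, Equiv.coe_addLeft, Prod.map]
        rw [st13_shift]
        by_cases hm : (0:ℤ) ≤ p.2
        · rw [if_pos hm, if_pos (by omega)]
        · rw [if_neg hm, if_neg (by omega)]
      rw [tsum_congr hc]
      rw [e.tsum_eq (fun p : ℤ × ℤ => if k ≤ p.2 then a p.1 p.2 else 0)]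
      have : (∑' p : ℤ × ℤ, if k ≤ p.2 then a p.1 p.2 else 0)
          = ∑ p ∈ I ×ˢ I, if k ≤ p.2 then a p.1 p.2 else 0 := by
        apply tsum_eq_sum
        intro p hp
        have hp' : ¬(p.1 ∈ I ∧ p.2 ∈ I) := by simpa [Finset.mem_product, -not_and] using hp
        split_ifs
        · by_cases h1 : p.1 ∈ I
          · exact ha1 p.1 p.2 (fun h2 => hp' ⟨h1, h2⟩)
          · exact ha0 p.1 p.2 h1
        · rfl
      rw [this, Finset.sum_product]
    show -phiH ((x - castV ![q, k]) 0) * _ = _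
    rw [hy0, s1]
  -- conv f as box sum
  have hconvf : conv f c x = ∑ j ∈ I, ∑ r ∈ I, c ![j, r] * a j r := by
    unfold conv
    have hc : ∑' p : ℤ × ℤ, c ![p.1, p.2] * a p.1 p.2
        = ∑' p : ℤ × ℤ, c (E p) * f (x - castV (E p)) :=
      tsum_congr fun p => by rw [hE, st13_pair]
    rw [← E.tsum_eq (fun α : Z2 => c α * f (x - castV α)), ← hc]
    rw [tsum_eq_sum (s := I ×ˢ I) ?van, Finset.sum_product]
    case van =>
      intro p hp
      have hp' : ¬(p.1 ∈ I ∧ p.2 ∈ I) := by simpa [Finset.mem_product, -not_and] using hp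
      have : a p.1 p.2 = 0 := by
        by_cases h1 : p.1 ∈ I
        · exact ha1 p.1 p.2 (fun h2 => hp' ⟨h1, h2⟩)
        · exact ha0 p.1 p.2 h1
      rw [show c ![p.1, p.2] * a p.1 p.2 = 0 from by rw [this, mul_zero]]
  -- conv G1 as box sum
  have hconvg1 : conv (G1 f) (nabla1 c) x
      = ∑ r ∈ I, ∑ k ∈ I, (c ![k - 1, r] - c ![k, r])
          * ((1 - psiH (x 0 - (k:ℝ))) * T r - A k r) := by
    unfold conv
    have hc : ∑' p : ℤ × ℤ, nabla1 c ![p.1, p.2] * G1 f (x - castV ![p.1, p.2])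
        = ∑' p : ℤ × ℤ, nabla1 c (E p) * G1 f (x - castV (E p)) :=
      tsum_congr fun p => by rw [hE, st13_pair]
    rw [← E.tsum_eq (fun α : Z2 => nabla1 c α * G1 f (x - castV α)), ← hc]
    rw [tsum_eq_sum (s := I ×ˢ I) ?van1, Finset.sum_product, Finset.sum_comm]
    case van1 =>
      intro p hp
      have hp' : ¬(p.1 ∈ I ∧ p.2 ∈ I) := by simpa [Finset.mem_product, -not_and] using hp
      have hz : G1 f (x - castV ![p.1, p.2]) = 0 := by
        apply st13_G1_zero f R hRc hR0
        by_cases h1 : p.1 ∈ I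
        · right
          rw [st13_coord1]
          linarith [hbig1 p.2 (fun h2 => hp' ⟨h1, h2⟩)]
        · left
          rw [st13_coord0]
          exact hbig0 p.1 h1
      rw [hz, mul_zero]
    apply Finset.sum_congr rfl
    intro r _
    apply Finset.sum_congr rfl
    intro k _
    rw [hG1 k r]
    unfold nabla1
    rw [st13_vsub1]
  -- conv G2 as box sum
  have hconvg2 : conv (G2 f) (nabla2 c) x
      = ∑ q ∈ I, ∑ k ∈ I, (c ![q, k - 1] - c ![q, k])
          * (-phiH (x 0 - (q:ℝ)) * A2 k) := by
    unfold conv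
    have hc : ∑' p : ℤ × ℤ, nabla2 c ![p.1, p.2] * G2 f (x - castV ![p.1, p.2])
        = ∑' p : ℤ × ℤ, nabla2 c (E p) * G2 f (x - castV (E p)) :=
      tsum_congr fun p => by rw [hE, st13_pair]
    rw [← E.tsum_eq (fun α : Z2 => nabla2 c α * G2 f (x - castV α)), ← hc]
    rw [tsum_eq_sum (s := I ×ˢ I) ?van2, Finset.sum_product]
    case van2 =>
      intro p hp
      have hp' : ¬(p.1 ∈ I ∧ p.2 ∈ I) := by simpa [Finset.mem_product, -not_and] using hp
      have hz : G2 f (x - castV ![p.1, p.2]) = 0 := by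
        apply st13_G2_zero f R hRc hR0 h0
        by_cases h1 : p.1 ∈ I
        · right
          rw [st13_coord1]
          linarith [hbig1 p.2 (fun h2 => hp' ⟨h1, h2⟩)]
        · left
          rw [st13_coord0]
          linarith [hbig0 p.1 h1, hR0]
      rw [hz, mul_zero]
    apply Finset.sum_congr rfl
    intro q _
    apply Finset.sum_congr rfl
    intro k _
    rw [hG2 q k]
    unfold nabla2
    rw [st13_vsub2]
  -- row Abel
  have hrow : ∀ r ∈ I, ∑ k ∈ I, (c ![k - 1, r] - c ![k, r])
        * ((1 - psiH (x 0 - (k:ℝ))) * T r - A k r)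
      = ∑ k ∈ I, c ![k, r] * (a k r - phiH (x 0 - (k:ℝ)) * T r) := by
    intro r _
    have habs0 : |x 0| ≤ (M:ℝ) := by linarith [hMx0, hR0]
    have hend1 : (1 - psiH (x 0 - ((-M : ℤ):ℝ))) * T r - A (-M) r = 0 := by
      have hAe : A (-M) r = T r := by
        apply Finset.sum_congr rfl
        intro j hj
        rw [if_pos (by simp only [hI, Finset.mem_Icc] at hj; omega)]
      have hpsi : psiH (x 0 - ((-M : ℤ):ℝ)) = 0 := by
        apply psiH_of_nonneg
        push_cast
        have := neg_abs_le (x 0)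
        linarith
      rw [hAe, hpsi]; ring
    have hend2 : (1 - psiH (x 0 - ((M + 1 : ℤ):ℝ))) * T r - A (M + 1) r = 0 := by
      have hAe : A (M + 1) r = 0 := by
        apply Finset.sum_eq_zero
        intro j hj
        rw [if_neg (by simp only [hI, Finset.mem_Icc] at hj; omega)]
      have hpsi : psiH (x 0 - ((M + 1 : ℤ):ℝ)) = 1 := by
        apply psiH_of_le
        push_cast
        have := le_abs_self (x 0)
        linarith
      rw [hAe, hpsi]; ring
    rw [st13_abel (fun k => c ![k, r])
        (fun k => (1 - psiH (x 0 - (k:ℝ))) * T r - A k r) M hM3 hend1 hend2]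
    apply Finset.sum_congr rfl
    intro k hk
    congr 1
    have hAd : A k r - A (k + 1) r = a k r := by
      have e1 : A k r - A (k + 1) r
          = ∑ j ∈ I, ((if k ≤ j then a j r else 0) - (if k + 1 ≤ j then a j r else 0)) := by
        rw [Finset.sum_sub_distrib]
      have e2 : ∀ j ∈ I, ((if k ≤ j then a j r else 0) - (if k + 1 ≤ j then a j r else 0))
          = (if j = k then a j r else 0) := by
        intro j _
        by_cases h1 : k + 1 ≤ j
        · rw [if_pos (by omega), if_pos h1, if_neg (by omega)]; ring
        · by_cases h2 : k ≤ j
          · rw [if_pos h2, if_neg h1, if_pos (by omega)]; ring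
          · rw [if_neg h2, if_neg h1, if_neg (by omega)]; ring
      rw [e1, Finset.sum_congr rfl e2, Finset.sum_ite_eq' I k (fun j => a j r), if_pos hk]
    have h5 := psiH_step (x 0 - (k:ℝ))
    push_cast
    rw [show x 0 - ((k:ℝ) + 1) = x 0 - (k:ℝ) - 1 from by ring]
    linear_combination (-(T r)) * h5 + hAd
  -- column Abel
  have hcol : ∀ q ∈ I, ∑ k ∈ I, (c ![q, k - 1] - c ![q, k]) * (-phiH (x 0 - (q:ℝ)) * A2 k)
      = phiH (x 0 - (q:ℝ)) * ∑ k ∈ I, c ![q, k] * T k := by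
    intro q _
    have e0 : ∀ k ∈ I, (c ![q, k - 1] - c ![q, k]) * (-phiH (x 0 - (q:ℝ)) * A2 k)
        = phiH (x 0 - (q:ℝ)) * ((c ![q, k - 1] - c ![q, k]) * (-A2 k)) := by
      intro k _; ring
    rw [Finset.sum_congr rfl e0, ← Finset.mul_sum]
    congr 1
    have hend1 : -A2 (-M) = 0 := by
      have : A2 (-M) = ∑ j ∈ I, ∑ r ∈ I, a j r := by
        apply Finset.sum_congr rfl
        intro j _
        apply Finset.sum_congr rfl
        intro r hr
        rw [if_pos (by simp only [hI, Finset.mem_Icc] at hr; omega)]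
      rw [this, h0box]; ring
    have hend2 : -A2 (M + 1) = 0 := by
      have : A2 (M + 1) = 0 := by
        apply Finset.sum_eq_zero
        intro j _
        apply Finset.sum_eq_zero
        intro r hr
        rw [if_neg (by simp only [hI, Finset.mem_Icc] at hr; omega)]
      rw [this]; ring
    rw [st13_abel (fun k => c ![q, k]) (fun k => -A2 k) M hM3 hend1 hend2]
    apply Finset.sum_congr rfl
    intro k hk
    congr 1
    have e1 : A2 k - A2 (k + 1) = ∑ j ∈ I, a j k := by
      have e2 : A2 k - A2 (k + 1)
          = ∑ j ∈ I, ((∑ r ∈ I, if k ≤ r then a j r else 0)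
              - (∑ r ∈ I, if k + 1 ≤ r then a j r else 0)) := by
        rw [Finset.sum_sub_distrib]
      rw [e2]
      apply Finset.sum_congr rfl
      intro j _
      rw [← Finset.sum_sub_distrib]
      have e3 : ∀ r ∈ I, ((if k ≤ r then a j r else 0) - (if k + 1 ≤ r then a j r else 0))
          = (if r = k then a j r else 0) := by
        intro r _
        by_cases h1 : k + 1 ≤ r
        · rw [if_pos (by omega), if_pos h1, if_neg (by omega)]; ring
        · by_cases h2 : k ≤ r
          · rw [if_pos h2, if_neg h1, if_pos (by omega)]; ring
          · rw [if_neg h2, if_neg h1, if_neg (by omega)]; ring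
      rw [Finset.sum_congr rfl e3, Finset.sum_ite_eq' I k (fun r => a j r), if_pos hk]
    have e1' : A2 k - A2 (k + 1) = T k := e1
    linear_combination e1'
  -- assemble
  rw [hconvf, hconvg1, hconvg2, Finset.sum_congr rfl hrow, Finset.sum_congr rfl hcol]
  have expand : ∑ r ∈ I, ∑ k ∈ I, c ![k, r] * (a k r - phiH (x 0 - (k:ℝ)) * T r)
      = (∑ r ∈ I, ∑ k ∈ I, c ![k, r] * a k r)
        - ∑ r ∈ I, ∑ k ∈ I, phiH (x 0 - (k:ℝ)) * (c ![k, r] * T r) := by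
    rw [← Finset.sum_sub_distrib]
    apply Finset.sum_congr rfl
    intro r _
    rw [← Finset.sum_sub_distrib]
    apply Finset.sum_congr rfl
    intro k _
    ring
  have g2side : ∑ q ∈ I, phiH (x 0 - (q:ℝ)) * ∑ k ∈ I, c ![q, k] * T k
      = ∑ q ∈ I, ∑ k ∈ I, phiH (x 0 - (q:ℝ)) * (c ![q, k] * T k) := by
    apply Finset.sum_congr rfl
    intro q _
    rw [Finset.mul_sum]
  have swap : ∑ r ∈ I, ∑ k ∈ I, phiH (x 0 - (k:ℝ)) * (c ![k, r] * T r)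
      = ∑ q ∈ I, ∑ k ∈ I, phiH (x 0 - (q:ℝ)) * (c ![q, k] * T k) := by
    rw [Finset.sum_comm]
  rw [expand, g2side, ← swap, sub_add_cancel, Finset.sum_comm]


/-- Let `f` be continuous and compactly supported with `Σ_α f(x − α) = 0` for all `x`
(equivalently `f*c = 0` for constant `c`). Then there are continuous compactly
supported `g₁, g₂` with `f*c = g₁*(∇₁c) + g₂*(∇₂c)` for every bounded `c`. -/
theorem stmt13 (f : (Fin 2 → ℝ) → ℝ) (hfc : Continuous f) (hfs : HasCompactSupport f)
    (h0 : ∀ x : Fin 2 → ℝ, ∑' α : Z2, f (x - castV α) = 0) :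
    ∃ g1 g2 : (Fin 2 → ℝ) → ℝ,
      Continuous g1 ∧ HasCompactSupport g1 ∧ Continuous g2 ∧ HasCompactSupport g2 ∧
      ∀ c : Z2 → ℝ, Bdd c → ∀ x : Fin 2 → ℝ,
        conv f c x = conv g1 (nabla1 c) x + conv g2 (nabla2 c) x := by
  obtain ⟨R₀, hR₀⟩ := (hfs : IsCompact (tsupport f)).isBounded.subset_closedBall 0
  set R := max R₀ 0 with hRdef
  have hR0 : (0:ℝ) ≤ R := le_max_right _ _
  have hRn : ∀ z : Fin 2 → ℝ, R < ‖z‖ → f z = 0 := by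
    intro z hz
    apply image_eq_zero_of_notMem_tsupport
    intro hmem
    have h1 := hR₀ hmem
    rw [Metric.mem_closedBall, dist_zero_right] at h1
    have h2 : ‖z‖ ≤ R := le_trans h1 (le_max_left _ _)
    linarith
  have hRc : ∀ z : Fin 2 → ℝ, (R < |z 0| ∨ R < |z 1|) → f z = 0 :=
    st13_coordvanish f R hRn
  refine ⟨G1 f, G2 f, st13_G1_cont f R hfc hRn, ?_, st13_G2_cont f R hfc hRn, ?_, ?_⟩
  · apply HasCompactSupport.intro (isCompact_closedBall (0 : Fin 2 → ℝ) (R + 2))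
    intro y hy
    have hy' : R + 2 < ‖y‖ := by
      by_contra hcon
      push_neg at hcon
      exact hy (by rwa [Metric.mem_closedBall, dist_zero_right])
    have hsplit : R + 2 < |y 0| ∨ R + 2 < |y 1| := by
      by_contra hcon
      push_neg at hcon
      have : ‖y‖ ≤ R + 2 := by
        rw [pi_norm_le_iff_of_nonneg (by linarith)]
        intro i
        fin_cases i
        · simpa [Real.norm_eq_abs] using hcon.1
        · simpa [Real.norm_eq_abs] using hcon.2
      linarith
    apply st13_G1_zero f R hRc hR0
    rcases hsplit with h | h
    · exact Or.inl h
    · exact Or.inr (by linarith)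
  · apply HasCompactSupport.intro (isCompact_closedBall (0 : Fin 2 → ℝ) (R + 2))
    intro y hy
    have hy' : R + 2 < ‖y‖ := by
      by_contra hcon
      push_neg at hcon
      exact hy (by rwa [Metric.mem_closedBall, dist_zero_right])
    have hsplit : R + 2 < |y 0| ∨ R + 2 < |y 1| := by
      by_contra hcon
      push_neg at hcon
      have : ‖y‖ ≤ R + 2 := by
        rw [pi_norm_le_iff_of_nonneg (by linarith)]
        intro i
        fin_cases i
        · simpa [Real.norm_eq_abs] using hcon.1
        · simpa [Real.norm_eq_abs] using hcon.2
      linarith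
    apply st13_G2_zero f R hRc hR0 h0
    rcases hsplit with h | h
    · exact Or.inl (by linarith)
    · exact Or.inr (by linarith)
  · intro c _ x
    exact st13_main f R hR0 hRc h0 c x
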